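/- Let Ω ⊆ ℝ² be a convex compact set with 0 in its interior and let σ_Ω(h) = max_{v ∈ Ω} (h₁v₁ + h₂v₂) be its support function. Let h = (h₁,h₂) : [0,T] → ℝ² be Lipschitz, let h₃ ∈ ℝ be a constant, and let w : [0,T] → Ω and f : [0,T] → [0,∞) be measurable such that for almost every t: ḣ₁(t) = −h₃ f(t) w₂(t), ḣ₂(t) = h₃ f(t) w₁(t), and w(t) ∈ argmax_{v ∈ Ω} (h₁(t)v₁ + h₂(t)v₂). Then the function t ↦ σ_Ω(h₁(t), h₂(t)) is constant on [0,T]. (This is the first-integral claim A = μ_{Ω°}(h₁,h₂) = const for the vertical subsystem of the Pontryagin Maximum Principle in the Finsler problem on the Heisenberg group, since the support function of Ω equals the Minkowski gauge of the polar set Ω°.) -/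

import Mathlib

open MeasureTheory Set

/-- A continuous function on `[a,b]` whose image is Lebesgue-null is constant. -/
lemma const_of_image_null {a b : ℝ} {G : ℝ → ℝ} (hG : ContinuousOn G (Set.Icc a b))
    (h0 : volume (G '' Set.Icc a b) = 0) :
    ∀ s ∈ Set.Icc a b, ∀ t ∈ Set.Icc a b, G s = G t := by
  intro s hs t ht
  by_contra hne
  have hsub : Set.uIcc s t ⊆ Set.Icc a b := Set.uIcc_subset_Icc hs ht
  have h1 : Set.uIcc (G s) (G t) ⊆ G '' Set.Icc a b :=
    (intermediate_value_uIcc (hG.mono hsub)).trans (Set.image_mono hsub)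
  have h2 : volume (Set.uIcc (G s) (G t)) = 0 := measure_mono_null h1 h0
  rw [Real.volume_interval] at h2
  simp [ENNReal.ofReal_eq_zero] at h2
  exact hne (by linarith)

theorem support_function_first_integral
    (Ω : Set (ℝ × ℝ)) (hconv : Convex ℝ Ω) (hcomp : IsCompact Ω)
    (h0 : (0 : ℝ × ℝ) ∈ interior Ω)
    (T : ℝ) (hT : 0 < T) (K : NNReal)
    (h₁ h₂ : ℝ → ℝ)
    (hLip1 : LipschitzOnWith K h₁ (Set.Icc 0 T))
    (hLip2 : LipschitzOnWith K h₂ (Set.Icc 0 T))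
    (h₃ : ℝ)
    (w : ℝ → ℝ × ℝ) (f : ℝ → ℝ)
    (hw : Measurable w) (hf : Measurable f)
    (hf0 : ∀ t, 0 ≤ f t)
    (hwΩ : ∀ t ∈ Set.Icc (0 : ℝ) T, w t ∈ Ω)
    (hder : ∀ᵐ t ∂(volume.restrict (Set.Icc (0 : ℝ) T)),
      HasDerivAt h₁ (-(h₃ * f t * (w t).2)) t ∧
        HasDerivAt h₂ (h₃ * f t * (w t).1) t)
    (hmax : ∀ᵐ t ∂(volume.restrict (Set.Icc (0 : ℝ) T)),
      ∀ v ∈ Ω, h₁ t * v.1 + h₂ t * v.2 ≤ h₁ t * (w t).1 + h₂ t * (w t).2) :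
    ∀ s ∈ Set.Icc (0 : ℝ) T, ∀ t ∈ Set.Icc (0 : ℝ) T,
      sSup {r : ℝ | ∃ v ∈ Ω, r = h₁ s * v.1 + h₂ s * v.2} =
        sSup {r : ℝ | ∃ v ∈ Ω, r = h₁ t * v.1 + h₂ t * v.2} := by
  classical
  have hΩ0 : (0 : ℝ × ℝ) ∈ Ω := interior_subset h0
  -- a bound on Ω
  obtain ⟨M, hMΩ⟩ : ∃ M : ℝ, ∀ v ∈ Ω, |v.1| ≤ M ∧ |v.2| ≤ M := by
    obtain ⟨M, hM⟩ := hcomp.isBounded.subset_closedBall 0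
    refine ⟨M, fun v hv => ?_⟩
    have hv' : ‖v‖ ≤ M := by simpa [Metric.mem_closedBall] using hM hv
    exact ⟨(norm_fst_le v).trans hv', (norm_snd_le v).trans hv'⟩
  have hM0 : 0 ≤ M := le_trans (abs_nonneg _) (hMΩ 0 hΩ0).1
  -- generic facts about the support-function sets
  have hne : ∀ a b : ℝ, {r : ℝ | ∃ v ∈ Ω, r = a * v.1 + b * v.2}.Nonempty :=
    fun a b => ⟨a * (0:ℝ×ℝ).1 + b * (0:ℝ×ℝ).2, ⟨0, hΩ0, rfl⟩⟩
  have hbdd : ∀ a b : ℝ, BddAbove {r : ℝ | ∃ v ∈ Ω, r = a * v.1 + b * v.2} := by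
    intro a b
    refine ⟨|a| * M + |b| * M, fun r hr => ?_⟩
    obtain ⟨v, hv, rfl⟩ := hr
    have h1 : a * v.1 ≤ |a| * M := by
      calc a * v.1 ≤ |a * v.1| := le_abs_self _
        _ = |a| * |v.1| := abs_mul _ _
        _ ≤ |a| * M := by
            exact mul_le_mul_of_nonneg_left (hMΩ v hv).1 (abs_nonneg a)
    have h2 : b * v.2 ≤ |b| * M := by
      calc b * v.2 ≤ |b * v.2| := le_abs_self _
        _ = |b| * |v.2| := abs_mul _ _
        _ ≤ |b| * M := by
            exact mul_le_mul_of_nonneg_left (hMΩ v hv).2 (abs_nonneg b)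
    linarith
  -- extend h₁, h₂ to globally Lipschitz functions
  obtain ⟨H₁, hH₁lip, hH₁eq⟩ := hLip1.extend_real
  obtain ⟨H₂, hH₂lip, hH₂eq⟩ := hLip2.extend_real
  -- the support function along (H₁, H₂)
  set G : ℝ → ℝ := fun t => sSup {r : ℝ | ∃ v ∈ Ω, r = H₁ t * v.1 + H₂ t * v.2} with hG
  have hGg : ∀ x ∈ Set.Icc (0:ℝ) T,
      G x = sSup {r : ℝ | ∃ v ∈ Ω, r = h₁ x * v.1 + h₂ x * v.2} := by
    intro x hx
    simp only [hG, hH₁eq hx, hH₂eq hx]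
  -- a sup inequality
  have hkey : ∀ x y : ℝ, G x ≤ G y + (M * |H₁ x - H₁ y| + M * |H₂ x - H₂ y|) := by
    intro x y
    refine csSup_le (hne _ _) ?_
    rintro r ⟨v, hv, rfl⟩
    have hy : H₁ y * v.1 + H₂ y * v.2 ≤ G y := le_csSup (hbdd _ _) ⟨v, hv, rfl⟩
    have e1 : (H₁ x - H₁ y) * v.1 ≤ M * |H₁ x - H₁ y| := by
      calc (H₁ x - H₁ y) * v.1 ≤ |(H₁ x - H₁ y) * v.1| := le_abs_self _
        _ = |H₁ x - H₁ y| * |v.1| := abs_mul _ _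
        _ ≤ |H₁ x - H₁ y| * M :=
            mul_le_mul_of_nonneg_left (hMΩ v hv).1 (abs_nonneg _)
        _ = M * |H₁ x - H₁ y| := mul_comm _ _
    have e2 : (H₂ x - H₂ y) * v.2 ≤ M * |H₂ x - H₂ y| := by
      calc (H₂ x - H₂ y) * v.2 ≤ |(H₂ x - H₂ y) * v.2| := le_abs_self _
        _ = |H₂ x - H₂ y| * |v.2| := abs_mul _ _
        _ ≤ |H₂ x - H₂ y| * M :=
            mul_le_mul_of_nonneg_left (hMΩ v hv).2 (abs_nonneg _)
        _ = M * |H₂ x - H₂ y| := mul_comm _ _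
    nlinarith [e1, e2, hy]
  -- G is Lipschitz
  have hGlip : LipschitzWith (2 * K * M.toNNReal) G := by
    refine LipschitzWith.of_dist_le_mul fun x y => ?_
    have b1 : |H₁ x - H₁ y| ≤ K * |x - y| := by
      have := hH₁lip.dist_le_mul x y
      simpa [Real.dist_eq] using this
    have b2 : |H₂ x - H₂ y| ≤ K * |x - y| := by
      have := hH₂lip.dist_le_mul x y
      simpa [Real.dist_eq] using this
    have bound : |G x - G y| ≤ M * |H₁ x - H₁ y| + M * |H₂ x - H₂ y| := by
      rw [abs_sub_le_iff]
      constructor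
      · have := hkey x y; linarith
      · have := hkey y x
        have a1 : |H₁ y - H₁ x| = |H₁ x - H₁ y| := abs_sub_comm _ _
        have a2 : |H₂ y - H₂ x| = |H₂ x - H₂ y| := abs_sub_comm _ _
        rw [a1, a2] at this; linarith
    have hcoe : ((2 * K * M.toNNReal : NNReal) : ℝ) = 2 * (K:ℝ) * M := by
      push_cast
      rw [Real.coe_toNNReal _ hM0]
    rw [Real.dist_eq, Real.dist_eq, hcoe]
    nlinarith [b1, b2, bound, mul_le_mul_of_nonneg_left b1 hM0,
      mul_le_mul_of_nonneg_left b2 hM0]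
  -- the good set
  set S : Set ℝ := {t | t ∈ Set.Ioo (0:ℝ) T ∧ DifferentiableAt ℝ G t ∧
      (HasDerivAt h₁ (-(h₃ * f t * (w t).2)) t ∧ HasDerivAt h₂ (h₃ * f t * (w t).1) t) ∧
      ∀ v ∈ Ω, h₁ t * v.1 + h₂ t * v.2 ≤ h₁ t * (w t).1 + h₂ t * (w t).2} with hS
  -- a.e. membership in S
  have haeS : ∀ᵐ t ∂(volume.restrict (Set.Icc (0:ℝ) T)), t ∈ S := by
    have hmem := ae_restrict_mem (μ := volume) (measurableSet_Icc : MeasurableSet (Set.Icc (0:ℝ) T))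
    have hpair : ∀ᵐ t ∂(volume.restrict (Set.Icc (0:ℝ) T)), t ∉ ({0, T} : Set ℝ) :=
      ae_restrict_of_ae (measure_eq_zero_iff_ae_notMem.mp
        ((Set.to_countable _).measure_zero volume))
    have hdiff : ∀ᵐ t ∂(volume.restrict (Set.Icc (0:ℝ) T)), DifferentiableAt ℝ G t :=
      ae_restrict_of_ae hGlip.ae_differentiableAt_of_real
    filter_upwards [hmem, hpair, hdiff, hder, hmax] with t h1 h2 h3 h4 h5
    simp only [Set.mem_insert_iff, Set.mem_singleton_iff, not_or] at h2
    exact ⟨⟨lt_of_le_of_ne h1.1 (Ne.symm h2.1), lt_of_le_of_ne h1.2 h2.2⟩, h3, h4, h5⟩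
  have hSnull : volume (Set.Icc (0:ℝ) T \ S) = 0 := by
    have := (ae_iff.mp haeS)
    rw [Measure.restrict_apply' measurableSet_Icc] at this
    refine measure_mono_null (fun x hx => ?_) this
    exact ⟨hx.2, hx.1⟩
  -- derivative of G vanishes on S
  have hGderiv : ∀ t ∈ S, HasDerivAt G 0 t := by
    rintro t ⟨htIoo, htdiff, ⟨hd1, hd2⟩, htmax⟩
    have htIcc : t ∈ Set.Icc (0:ℝ) T := Set.mem_Icc_of_Ioo htIoo
    have hnhds : Set.Icc (0:ℝ) T ∈ nhds t := Icc_mem_nhds htIoo.1 htIoo.2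
    have hH1 : HasDerivAt H₁ (-(h₃ * f t * (w t).2)) t := by
      refine hd1.congr_of_eventuallyEq ?_
      exact Filter.eventuallyEq_of_mem hnhds fun x hx => (hH₁eq hx).symm
    have hH2 : HasDerivAt H₂ (h₃ * f t * (w t).1) t := by
      refine hd2.congr_of_eventuallyEq ?_
      exact Filter.eventuallyEq_of_mem hnhds fun x hx => (hH₂eq hx).symm
    set φ : ℝ → ℝ := fun x => H₁ x * (w t).1 + H₂ x * (w t).2 with hφ
    have hφder : HasDerivAt φ 0 t := by
      have := (hH1.mul_const (w t).1).add (hH2.mul_const (w t).2)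
      exact this.congr_deriv (by ring)
    have hwt : w t ∈ Ω := hwΩ t htIcc
    -- G t = φ t
    have hGt : G t = φ t := by
      have hφt : φ t = h₁ t * (w t).1 + h₂ t * (w t).2 := by
        simp only [hφ, hH₁eq htIcc, hH₂eq htIcc]
      refine le_antisymm (csSup_le (hne _ _) ?_) ?_
      · rintro r ⟨v, hv, rfl⟩
        show H₁ t * v.1 + H₂ t * v.2 ≤ φ t
        rw [hφt, ← hH₁eq htIcc, ← hH₂eq htIcc]
        exact htmax v hv
      · exact le_csSup (hbdd _ _) ⟨w t, hwt, rfl⟩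
    -- local min of G - φ at t
    have hmin : IsLocalMin (fun x => G x - φ x) t := by
      refine Filter.eventually_of_mem hnhds fun x hx => ?_
      have hφx : φ x ≤ G x := le_csSup (hbdd _ _) ⟨w t, hwt, rfl⟩
      simp only [hGt]
      linarith
    have hψ : HasDerivAt (fun x => G x - φ x) (deriv G t - 0) t :=
      (htdiff.hasDerivAt).sub hφder
    have h0' : deriv G t - 0 = 0 := by
      rw [← hψ.deriv]; exact hmin.deriv_eq_zero
    have : deriv G t = 0 := by linarith [h0']
    simpa [this] using htdiff.hasDerivAt
  -- image of good set is null
  have himgS : volume (G '' S) = 0 := by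
    refine addHaar_image_eq_zero_of_det_fderivWithin_eq_zero volume
      (f' := fun _ => (0 : ℝ →L[ℝ] ℝ)) (fun x hx => ?_) (fun x _ => ?_)
    · have := hGderiv x hx
      have h1 : HasFDerivAt G (ContinuousLinearMap.smulRight (1 : ℝ →L[ℝ] ℝ) (0:ℝ)) x :=
        hasDerivAt_iff_hasFDerivAt.mp this
      have h2 : ContinuousLinearMap.smulRight (1 : ℝ →L[ℝ] ℝ) (0:ℝ) = 0 := by
        ext; simp
      rw [h2] at h1
      exact h1.hasFDerivWithinAt
    · simp [ContinuousLinearMap.det]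
  -- image of bad set is null
  have himgbad : volume (G '' (Set.Icc (0:ℝ) T \ S)) = 0 := by
    have hb := hGlip.hausdorffMeasure_image_le (d := 1) zero_le_one (Set.Icc (0:ℝ) T \ S)
    rw [MeasureTheory.hausdorffMeasure_real] at hb
    refine le_antisymm (hb.trans ?_) zero_le
    rw [hSnull, mul_zero]
  -- image of [0,T] is null
  have himg : volume (G '' Set.Icc (0:ℝ) T) = 0 := by
    have hsub : G '' Set.Icc (0:ℝ) T ⊆ G '' S ∪ G '' (Set.Icc (0:ℝ) T \ S) := by
      rw [← Set.image_union]
      exact Set.image_mono fun x hx => by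
        by_cases h : x ∈ S
        · exact Or.inl h
        · exact Or.inr ⟨hx, h⟩
    exact measure_mono_null hsub (by
      refine measure_union_null himgS himgbad)
  -- conclude
  intro s hs t ht
  rw [← hGg s hs, ← hGg t ht]
  exact const_of_image_null hGlip.continuous.continuousOn himg s hs t ht
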